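/- For PDHG with step size s < 1/‖A‖ applied to a convex-concave minimax problem with saddle point z_*, the last iterate satisfies, for all z = (x,y) and k ≥ 1: L(x_k, y) - L(x, y_k) ≤ (1/√k)(‖z_0 - z_*‖²_{P_s} + ‖z_0 - z_*‖_{P_s} ‖z_* - z‖_{P_s}). -/

import Mathlib

open Matrix

/-- The ℓ₂ operator norm of a real matrix. -/
noncomputable def opNorm {m n : ℕ} (A : Matrix (Fin m) (Fin n) ℝ) : ℝ :=
  ‖LinearMap.toContinuousLinearMap (Matrix.toEuclideanLin A)‖

/-- The PDHG matrix `P_s = [[(1/s)Iₙ, -Aᵀ], [-A, (1/s)Iₘ]]`. -/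
noncomputable def Ps {m n : ℕ} (s : ℝ) (A : Matrix (Fin m) (Fin n) ℝ) :
    Matrix (Fin n ⊕ Fin m) (Fin n ⊕ Fin m) ℝ :=
  Matrix.fromBlocks ((1/s) • 1) (-Aᵀ) (-A) ((1/s) • 1)

/-- Quadratic form `⟨v, G v⟩`. -/
def qf {ι : Type*} [Fintype ι] (G : Matrix ι ι ℝ) (v : ι → ℝ) : ℝ := v ⬝ᵥ G.mulVec v

/-! ### Auxiliary development for the PDHG analysis -/

/-- The quadratic form of `P_s` expressed on the two blocks. -/
noncomputable def Qf {m n : ℕ} (s : ℝ) (A : Matrix (Fin m) (Fin n) ℝ)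
    (x : Fin n → ℝ) (y : Fin m → ℝ) : ℝ :=
  (1/s) * (x ⬝ᵥ x) + (1/s) * (y ⬝ᵥ y) - 2 * (A.mulVec x ⬝ᵥ y)

/-- The symmetric bilinear form associated with `P_s`. -/
noncomputable def Bil {m n : ℕ} (s : ℝ) (A : Matrix (Fin m) (Fin n) ℝ)
    (x1 : Fin n → ℝ) (y1 : Fin m → ℝ) (x2 : Fin n → ℝ) (y2 : Fin m → ℝ) : ℝ :=
  (1/s) * (x1 ⬝ᵥ x2) + (1/s) * (y1 ⬝ᵥ y2) - A.mulVec x1 ⬝ᵥ y2 - A.mulVec x2 ⬝ᵥ y1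

lemma trans_dot {m n : ℕ} (A : Matrix (Fin m) (Fin n) ℝ) (w : Fin m → ℝ) (u : Fin n → ℝ) :
    (Aᵀ *ᵥ w) ⬝ᵥ u = (A *ᵥ u) ⬝ᵥ w := by
  rw [mulVec_transpose, dotProduct_comm (A *ᵥ u) w, dotProduct_mulVec]

lemma Qf_add_smul {m n : ℕ} (s : ℝ) (A : Matrix (Fin m) (Fin n) ℝ) (t : ℝ)
    (x1 x2 : Fin n → ℝ) (y1 y2 : Fin m → ℝ) :
    Qf s A (x1 + t • x2) (y1 + t • y2) =
      Qf s A x1 y1 + 2 * t * Bil s A x1 y1 x2 y2 + t^2 * Qf s A x2 y2 := by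
  simp only [Qf, Bil, dotProduct_add, add_dotProduct, dotProduct_smul, smul_dotProduct,
    mulVec_add, mulVec_smul, smul_eq_mul, dotProduct_comm x2 x1, dotProduct_comm y2 y1]
  ring

lemma Qf_add {m n : ℕ} (s : ℝ) (A : Matrix (Fin m) (Fin n) ℝ)
    (x1 x2 : Fin n → ℝ) (y1 y2 : Fin m → ℝ) :
    Qf s A (x1 + x2) (y1 + y2) =
      Qf s A x1 y1 + 2 * Bil s A x1 y1 x2 y2 + Qf s A x2 y2 := by
  have := Qf_add_smul s A 1 x1 x2 y1 y2
  simpa using this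

lemma Bil_neg {m n : ℕ} (s : ℝ) (A : Matrix (Fin m) (Fin n) ℝ)
    (x1 x2 : Fin n → ℝ) (y1 y2 : Fin m → ℝ) :
    Bil s A x1 y1 (-x2) (-y2) = - Bil s A x1 y1 x2 y2 := by
  simp only [Bil, dotProduct_neg, mulVec_neg, neg_dotProduct]; ring

lemma Bil_self {m n : ℕ} (s : ℝ) (A : Matrix (Fin m) (Fin n) ℝ)
    (x1 : Fin n → ℝ) (y1 : Fin m → ℝ) :
    Bil s A x1 y1 x1 y1 = Qf s A x1 y1 := by
  simp only [Bil, Qf]; ring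

lemma dot_self_nonneg {n : ℕ} (x : Fin n → ℝ) : 0 ≤ x ⬝ᵥ x :=
  Finset.sum_nonneg fun i _ => mul_self_nonneg (x i)

lemma sqrt_dot {n : ℕ} (x : Fin n → ℝ) :
    Real.sqrt (x ⬝ᵥ x) = ‖(WithLp.equiv 2 (Fin n → ℝ)).symm x‖ := by
  rw [EuclideanSpace.norm_eq]
  congr 1
  simp [dotProduct, sq]

lemma mulVec_dot_le {m n : ℕ} (A : Matrix (Fin m) (Fin n) ℝ) (x : Fin n → ℝ) (y : Fin m → ℝ) :
    (A *ᵥ x) ⬝ᵥ y ≤ opNorm A * Real.sqrt (x ⬝ᵥ x) * Real.sqrt (y ⬝ᵥ y) := by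
  set x' : EuclideanSpace ℝ (Fin n) := (WithLp.equiv 2 (Fin n → ℝ)).symm x
  set y' : EuclideanSpace ℝ (Fin m) := (WithLp.equiv 2 (Fin m → ℝ)).symm y
  have h1 : (A *ᵥ x) ⬝ᵥ y = inner ℝ (Matrix.toEuclideanLin A x') y' := by
    rw [Matrix.toEuclideanLin_apply]
    simp [PiLp.inner_apply, dotProduct, x', y', RCLike.inner_apply, mul_comm]
  rw [h1, sqrt_dot, sqrt_dot]
  calc inner ℝ (Matrix.toEuclideanLin A x') y' ≤ ‖Matrix.toEuclideanLin A x'‖ * ‖y'‖ :=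
        real_inner_le_norm _ _
    _ ≤ (opNorm A * ‖x'‖) * ‖y'‖ := by
        apply mul_le_mul_of_nonneg_right _ (norm_nonneg _)
        exact ((LinearMap.toContinuousLinearMap (Matrix.toEuclideanLin A)).le_opNorm x')
    _ = opNorm A * ‖x'‖ * ‖y'‖ := by ring

lemma Qf_nonneg {m n : ℕ} {s : ℝ} {A : Matrix (Fin m) (Fin n) ℝ}
    (hs : 0 < s) (hsA : s * opNorm A < 1) (x : Fin n → ℝ) (y : Fin m → ℝ) :
    0 ≤ Qf s A x y := by
  set a := Real.sqrt (x ⬝ᵥ x) with ha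
  set b := Real.sqrt (y ⬝ᵥ y) with hb
  have ha0 : 0 ≤ a := Real.sqrt_nonneg _
  have hb0 : 0 ≤ b := Real.sqrt_nonneg _
  have ha2 : a^2 = x ⬝ᵥ x := Real.sq_sqrt (dot_self_nonneg x)
  have hb2 : b^2 = y ⬝ᵥ y := Real.sq_sqrt (dot_self_nonneg y)
  have hc : (A *ᵥ x) ⬝ᵥ y ≤ opNorm A * a * b := mulVec_dot_le A x y
  have hN : 0 ≤ opNorm A := norm_nonneg _
  have key : 0 ≤ s * Qf s A x y := by
    have e : s * Qf s A x y = a^2 + b^2 - 2 * s * ((A *ᵥ x) ⬝ᵥ y) := by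
      rw [Qf, ha2, hb2]; field_simp
    rw [e]
    nlinarith [sq_nonneg (a - b), mul_nonneg ha0 hb0,
      mul_nonneg (mul_nonneg hs.le hN) (mul_nonneg ha0 hb0)]
  nlinarith [key]

lemma Bil_le_sqrt {m n : ℕ} {s : ℝ} {A : Matrix (Fin m) (Fin n) ℝ}
    (hs : 0 < s) (hsA : s * opNorm A < 1)
    (x1 x2 : Fin n → ℝ) (y1 y2 : Fin m → ℝ) :
    Bil s A x1 y1 x2 y2 ≤ Real.sqrt (Qf s A x1 y1) * Real.sqrt (Qf s A x2 y2) := by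
  have hQ1 := Qf_nonneg hs hsA x1 y1
  have hQ2 := Qf_nonneg hs hsA x2 y2
  have hdisc : discrim (Qf s A x2 y2) (2 * Bil s A x1 y1 x2 y2) (Qf s A x1 y1) ≤ 0 := by
    apply discrim_le_zero
    intro t
    have := Qf_nonneg hs hsA (x1 + t • x2) (y1 + t • y2)
    rw [Qf_add_smul] at this
    nlinarith [this]
  rw [discrim] at hdisc
  have hB2 : (Bil s A x1 y1 x2 y2)^2 ≤ Qf s A x1 y1 * Qf s A x2 y2 := by nlinarith [hdisc]
  calc Bil s A x1 y1 x2 y2 ≤ |Bil s A x1 y1 x2 y2| := le_abs_self _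
    _ = Real.sqrt ((Bil s A x1 y1 x2 y2)^2) := (Real.sqrt_sq_eq_abs _).symm
    _ ≤ Real.sqrt (Qf s A x1 y1 * Qf s A x2 y2) := Real.sqrt_le_sqrt hB2
    _ = Real.sqrt (Qf s A x1 y1) * Real.sqrt (Qf s A x2 y2) := Real.sqrt_mul hQ1 _

lemma sqrt_Qf_add_le {m n : ℕ} {s : ℝ} {A : Matrix (Fin m) (Fin n) ℝ}
    (hs : 0 < s) (hsA : s * opNorm A < 1)
    (x1 x2 : Fin n → ℝ) (y1 y2 : Fin m → ℝ) :
    Real.sqrt (Qf s A (x1 + x2) (y1 + y2)) ≤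
      Real.sqrt (Qf s A x1 y1) + Real.sqrt (Qf s A x2 y2) := by
  have hQ1 := Qf_nonneg hs hsA x1 y1
  have hQ2 := Qf_nonneg hs hsA x2 y2
  have h1 : Qf s A (x1 + x2) (y1 + y2) ≤
      (Real.sqrt (Qf s A x1 y1) + Real.sqrt (Qf s A x2 y2))^2 := by
    rw [Qf_add]
    have := Bil_le_sqrt hs hsA x1 x2 y1 y2
    nlinarith [Real.sq_sqrt hQ1, Real.sq_sqrt hQ2]
  calc Real.sqrt (Qf s A (x1 + x2) (y1 + y2))
      ≤ Real.sqrt ((Real.sqrt (Qf s A x1 y1) + Real.sqrt (Qf s A x2 y2))^2) :=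
        Real.sqrt_le_sqrt h1
    _ = Real.sqrt (Qf s A x1 y1) + Real.sqrt (Qf s A x2 y2) := by
        rw [Real.sqrt_sq (by positivity)]

lemma dot_expand {n : ℕ} (w d : Fin n → ℝ) (t : ℝ) :
    (w + t • d) ⬝ᵥ (w + t • d) = w ⬝ᵥ w + 2 * t * (w ⬝ᵥ d) + t^2 * (d ⬝ᵥ d) := by
  simp only [dotProduct_add, add_dotProduct, dotProduct_smul, smul_dotProduct, smul_eq_mul,
    dotProduct_comm d w]
  ring

lemma prox_grad {n : ℕ} {s : ℝ} (hs : 0 < s) {f : (Fin n → ℝ) → ℝ}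
    (hf : ConvexOn ℝ Set.univ f) (a p : Fin n → ℝ)
    (h : ∀ u, f p + (1/(2*s)) * ((p - a) ⬝ᵥ (p - a)) ≤ f u + (1/(2*s)) * ((u - a) ⬝ᵥ (u - a)))
    (u : Fin n → ℝ) :
    f p ≤ f u + (1/s) * ((p - a) ⬝ᵥ (u - p)) := by
  set w := p - a with hw
  set d := u - p with hd
  set c := (1/(2*s)) * (d ⬝ᵥ d) with hc
  have hc0 : 0 ≤ c := by
    apply mul_nonneg _ (dot_self_nonneg d)
    positivity
  have step : ∀ t : ℝ, 0 < t → t ≤ 1 → f p ≤ f u + (1/s) * (w ⬝ᵥ d) + t * c := by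
    intro t ht0 ht1
    have e0 : (1 - t) • p + t • u = p + t • d := by
      ext i; simp [hd]; ring
    have hcvx : f ((1 - t) • p + t • u) ≤ (1 - t) * f p + t * f u := by
      have := hf.2 (Set.mem_univ p) (Set.mem_univ u) (by linarith : (0:ℝ) ≤ 1 - t)
        ht0.le (by ring)
      simpa [smul_eq_mul] using this
    rw [e0] at hcvx
    have hq := h (p + t • d)
    have e1 : (p + t • d) - a = w + t • d := by
      ext i; simp [hw]; ring
    rw [e1, dot_expand] at hq
    have key : t * f p ≤ t * (f u + (1/s) * (w ⬝ᵥ d) + t * c) := by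
      have ering : (1/(2*s)) * (w ⬝ᵥ w + 2 * t * (w ⬝ᵥ d) + t^2 * (d ⬝ᵥ d))
          - (1/(2*s)) * (w ⬝ᵥ w) = t * ((1/s) * (w ⬝ᵥ d) + t * c) := by
        rw [hc]; field_simp; ring
      nlinarith [hq, hcvx]
    exact le_of_mul_le_mul_left (by linarith [key]) ht0
  apply le_of_forall_pos_le_add
  intro ε hε
  rcases le_or_gt c 0 with hcle | hcpos
  · have h1 := step 1 one_pos le_rfl
    have h2 : f p ≤ f u + (1/s) * (w ⬝ᵥ d) := by nlinarith [h1]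
    linarith
  · set t := min 1 (ε / c) with htdef
    have ht0 : 0 < t := lt_min one_pos (div_pos hε hcpos)
    have ht1 : t ≤ 1 := min_le_left _ _
    have htc : t * c ≤ ε := by
      have : t ≤ ε / c := min_le_right _ _
      calc t * c ≤ (ε / c) * c := by nlinarith
        _ = ε := by field_simp
    have := step t ht0 ht1
    linarith

lemma key_id {m n : ℕ} {s : ℝ} (hs : s ≠ 0) (A : Matrix (Fin m) (Fin n) ℝ)
    (x1 x2 u : Fin n → ℝ) (y1 y2 v : Fin m → ℝ) :
    (1/s) * ((x2 - (x1 - s • Aᵀ *ᵥ y1)) ⬝ᵥ (u - x2))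
      + (1/s) * ((y2 - (y1 + s • A *ᵥ ((2:ℝ) • x2 - x1))) ⬝ᵥ (v - y2))
      + (A *ᵥ x2 ⬝ᵥ v) - (A *ᵥ u ⬝ᵥ y2)
    = Bil s A (x1 - x2) (y1 - y2) (x2 - u) (y2 - v) := by
  simp only [Bil, sub_dotProduct, dotProduct_sub, add_dotProduct, dotProduct_add,
    smul_dotProduct, dotProduct_smul, mulVec_sub, mulVec_smul, mulVec_add, smul_eq_mul,
    trans_dot]
  field_simp
  ring_nf

lemma sub_elim {m n : ℕ} (a c : Fin n → ℝ) (b d : Fin m → ℝ) :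
    Sum.elim a b - Sum.elim c d = Sum.elim (a - c) (b - d) := by
  ext i; cases i <;> simp

lemma qf_Ps {m n : ℕ} (s : ℝ) (A : Matrix (Fin m) (Fin n) ℝ)
    (xv : Fin n → ℝ) (yv : Fin m → ℝ) :
    qf (Ps s A) (Sum.elim xv yv) = Qf s A xv yv := by
  simp only [qf, Ps, fromBlocks_mulVec, Sum.elim_comp_inl, Sum.elim_comp_inr,
    sumElim_dotProduct_sumElim, smul_mulVec, one_mulVec, neg_mulVec,
    dotProduct_add, dotProduct_smul, dotProduct_neg, smul_eq_mul, Qf]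
  rw [dotProduct_comm yv (A *ᵥ xv)]
  have h : xv ⬝ᵥ (Aᵀ *ᵥ yv) = (A *ᵥ xv) ⬝ᵥ yv := by
    rw [dotProduct_comm, trans_dot]
  rw [h]; ring
/-- Last-iterate `O(1/√k)` bound on the primal-dual gap of PDHG:
iterates are given by the prox (minimizer) characterization, `(xs, ys)` is a
saddle point of `L(x,y) = f(x) + ⟨Ax, y⟩ - g(y)`. -/
theorem stmt8 {m n : ℕ} (s : ℝ) (A : Matrix (Fin m) (Fin n) ℝ)
    (f : (Fin n → ℝ) → ℝ) (g : (Fin m → ℝ) → ℝ)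
    (hf : ConvexOn ℝ Set.univ f) (hg : ConvexOn ℝ Set.univ g)
    (hs : 0 < s) (hsA : s * opNorm A < 1)
    (L : (Fin n → ℝ) → (Fin m → ℝ) → ℝ)
    (hL : ∀ x y, L x y = f x + (A.mulVec x) ⬝ᵥ y - g y)
    (x : ℕ → Fin n → ℝ) (y : ℕ → Fin m → ℝ)
    (hx : ∀ k, ∀ u : Fin n → ℝ,
      f (x (k+1)) + (1/(2*s)) * ((x (k+1) - (x k - s • Aᵀ.mulVec (y k))) ⬝ᵥ
          (x (k+1) - (x k - s • Aᵀ.mulVec (y k))))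
        ≤ f u + (1/(2*s)) * ((u - (x k - s • Aᵀ.mulVec (y k))) ⬝ᵥ
          (u - (x k - s • Aᵀ.mulVec (y k)))))
    (hy : ∀ k, ∀ v : Fin m → ℝ,
      g (y (k+1)) + (1/(2*s)) * ((y (k+1) - (y k + s • A.mulVec ((2:ℝ) • x (k+1) - x k))) ⬝ᵥ
          (y (k+1) - (y k + s • A.mulVec ((2:ℝ) • x (k+1) - x k))))
        ≤ g v + (1/(2*s)) * ((v - (y k + s • A.mulVec ((2:ℝ) • x (k+1) - x k))) ⬝ᵥ
          (v - (y k + s • A.mulVec ((2:ℝ) • x (k+1) - x k)))))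
    (xs : Fin n → ℝ) (ys : Fin m → ℝ)
    (hsaddle : ∀ x' y', L xs y' ≤ L x' ys) :
    ∀ k : ℕ, 1 ≤ k → ∀ (x' : Fin n → ℝ) (y' : Fin m → ℝ),
      L (x k) y' - L x' (y k) ≤
        (1 / Real.sqrt k) *
          (qf (Ps s A) (Sum.elim (x 0) (y 0) - Sum.elim xs ys) +
            Real.sqrt (qf (Ps s A) (Sum.elim (x 0) (y 0) - Sum.elim xs ys)) *
              Real.sqrt (qf (Ps s A) (Sum.elim xs ys - Sum.elim x' y'))) := by
  have hs0 : s ≠ 0 := ne_of_gt hs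
  -- one-step inequality
  have hone : ∀ k (u : Fin n → ℝ) (v : Fin m → ℝ),
      L (x (k+1)) v - L u (y (k+1)) ≤
        Bil s A (x k - x (k+1)) (y k - y (k+1)) (x (k+1) - u) (y (k+1) - v) := by
    intro k u v
    have hfu := prox_grad hs hf (x k - s • Aᵀ.mulVec (y k)) (x (k+1)) (hx k) u
    have hgv := prox_grad hs hg (y k + s • A.mulVec ((2:ℝ) • x (k+1) - x k)) (y (k+1)) (hy k) v
    have hkid := key_id hs0 A (x k) (x (k+1)) u (y k) (y (k+1)) v
    rw [hL, hL]
    linarith [hfu, hgv, hkid]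
  obtain ⟨q, hq⟩ : ∃ q : ℕ → ℝ, ∀ j, q j = Qf s A (x j - xs) (y j - ys) := ⟨_, fun _ => rfl⟩
  obtain ⟨r, hr⟩ : ∃ r : ℕ → ℝ, ∀ j, r j = Qf s A (x j - x (j+1)) (y j - y (j+1)) :=
    ⟨_, fun _ => rfl⟩
  have hq_nonneg : ∀ j, 0 ≤ q j := fun j => by rw [hq]; exact Qf_nonneg hs hsA _ _
  have hr_nonneg : ∀ j, 0 ≤ r j := fun j => by rw [hr]; exact Qf_nonneg hs hsA _ _
  -- Fejér monotonicity
  have hfejer : ∀ j, q (j+1) + r j ≤ q j := by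
    intro j
    have hpos : 0 ≤ L (x (j+1)) ys - L xs (y (j+1)) := by
      have := hsaddle (x (j+1)) (y (j+1)); linarith
    have hb := hone j xs ys
    have hsplit : q j = r j +
        2 * Bil s A (x j - x (j+1)) (y j - y (j+1)) (x (j+1) - xs) (y (j+1) - ys) + q (j+1) := by
      rw [hq j, hq (j+1), hr j]
      have e1 : x j - xs = (x j - x (j+1)) + (x (j+1) - xs) := (sub_add_sub_cancel _ _ _).symm
      have e2 : y j - ys = (y j - y (j+1)) + (y (j+1) - ys) := (sub_add_sub_cancel _ _ _).symm
      rw [e1, e2, Qf_add]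
    linarith [hb, hpos, hsplit]
  -- residual monotonicity
  have hmono : ∀ j, r (j+1) ≤ r j := by
    intro j
    have h1 := hone j (x (j+1+1)) (y (j+1+1))
    have h2 := hone (j+1) (x (j+1)) (y (j+1))
    have e : Bil s A (x (j+1) - x (j+1+1)) (y (j+1) - y (j+1+1))
        (x (j+1+1) - x (j+1)) (y (j+1+1) - y (j+1)) = - r (j+1) := by
      rw [hr (j+1), ← neg_sub (x (j+1)) (x (j+1+1)), ← neg_sub (y (j+1)) (y (j+1+1)),
        Bil_neg, Bil_self]
    rw [e] at h2
    have hBnn : r (j+1) ≤ Bil s A (x j - x (j+1)) (y j - y (j+1))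
        (x (j+1) - x (j+1+1)) (y (j+1) - y (j+1+1)) := by linarith [h1, h2]
    have hcs := Bil_le_sqrt hs hsA (x j - x (j+1)) (x (j+1) - x (j+1+1))
        (y j - y (j+1)) (y (j+1) - y (j+1+1))
    rw [← hr j, ← hr (j+1)] at hcs
    have h3 : r (j+1) ≤ Real.sqrt (r j) * Real.sqrt (r (j+1)) := le_trans hBnn hcs
    nlinarith [Real.sq_sqrt (hr_nonneg j), Real.sq_sqrt (hr_nonneg (j+1)),
      Real.sqrt_nonneg (r j), Real.sqrt_nonneg (r (j+1)),
      sq_nonneg (Real.sqrt (r j) - Real.sqrt (r (j+1)))]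
  have hmono' : ∀ i j, i ≤ j → r j ≤ r i := by
    intro i j hij
    induction j, hij using Nat.le_induction with
    | base => exact le_rfl
    | succ k hk ih => exact le_trans (hmono k) ih
  -- summation
  have hsum : ∀ K, (∑ j ∈ Finset.range K, r j) + q K ≤ q 0 := by
    intro K
    induction K with
    | zero => simp
    | succ K ih =>
      have := hfejer K
      rw [Finset.sum_range_succ]
      linarith
  have hqmono : ∀ K, q K ≤ q 0 := by
    intro K
    have h1 := hsum K
    have h2 : 0 ≤ ∑ j ∈ Finset.range K, r j := Finset.sum_nonneg fun j _ => hr_nonneg j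
    linarith
  -- main bound
  intro k hk x' y'
  obtain ⟨k', rfl⟩ : ∃ k', k = k' + 1 := ⟨k - 1, (Nat.succ_pred_eq_of_pos hk).symm⟩
  rw [sub_elim, sub_elim, qf_Ps, qf_Ps, ← hq 0]
  have hkr : ((k' : ℝ) + 1) * r k' ≤ q 0 := by
    have hsum' := hsum (k'+1)
    have hlow : ((k' : ℝ) + 1) * r k' ≤ ∑ j ∈ Finset.range (k'+1), r j := by
      have hrs : ∀ j ∈ Finset.range (k'+1), r k' ≤ r j := fun j hj =>
        hmono' j k' (Nat.lt_succ_iff.mp (Finset.mem_range.mp hj))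
      calc ((k' : ℝ) + 1) * r k' = ∑ _j ∈ Finset.range (k'+1), r k' := by
            rw [Finset.sum_const, Finset.card_range, nsmul_eq_mul]; push_cast; ring
        _ ≤ ∑ j ∈ Finset.range (k'+1), r j := Finset.sum_le_sum hrs
    have hqk := hq_nonneg (k'+1)
    linarith
  have hgap := hone k' x' y'
  have hcs := Bil_le_sqrt hs hsA (x k' - x (k'+1)) (x (k'+1) - x')
      (y k' - y (k'+1)) (y (k'+1) - y')
  rw [← hr k'] at hcs
  have htri : Real.sqrt (Qf s A (x (k'+1) - x') (y (k'+1) - y')) ≤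
      Real.sqrt (q (k'+1)) + Real.sqrt (Qf s A (xs - x') (ys - y')) := by
    have e1 : x (k'+1) - x' = (x (k'+1) - xs) + (xs - x') := (sub_add_sub_cancel _ _ _).symm
    have e2 : y (k'+1) - y' = (y (k'+1) - ys) + (ys - y') := (sub_add_sub_cancel _ _ _).symm
    rw [e1, e2, hq (k'+1)]
    exact sqrt_Qf_add_le hs hsA _ _ _ _
  have hKpos : (0:ℝ) < (k' : ℝ) + 1 := by positivity
  have hsK : (0:ℝ) < Real.sqrt ((k' : ℝ) + 1) := Real.sqrt_pos.mpr hKpos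
  have hsr : Real.sqrt (r k') ≤ Real.sqrt (q 0) / Real.sqrt ((k' : ℝ) + 1) := by
    have h1 : r k' ≤ q 0 / ((k' : ℝ) + 1) := by
      rw [le_div_iff₀ hKpos]; linarith [hkr]
    calc Real.sqrt (r k') ≤ Real.sqrt (q 0 / ((k' : ℝ) + 1)) := Real.sqrt_le_sqrt h1
      _ = Real.sqrt (q 0) / Real.sqrt ((k' : ℝ) + 1) := Real.sqrt_div (hq_nonneg 0) _
  have hsq : Real.sqrt (q (k'+1)) ≤ Real.sqrt (q 0) := Real.sqrt_le_sqrt (hqmono (k'+1))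
  set SQ := Real.sqrt (Qf s A (xs - x') (ys - y')) with hSQ
  have hSQ0 : 0 ≤ SQ := Real.sqrt_nonneg _
  have htri' : Real.sqrt (Qf s A (x (k'+1) - x') (y (k'+1) - y')) ≤
      Real.sqrt (q 0) + SQ := by linarith [htri, hsq]
  have hchain : L (x (k'+1)) y' - L x' (y (k'+1)) ≤
      (Real.sqrt (q 0) / Real.sqrt ((k' : ℝ) + 1)) * (Real.sqrt (q 0) + SQ) := by
    calc L (x (k'+1)) y' - L x' (y (k'+1))
        ≤ Real.sqrt (r k') * Real.sqrt (Qf s A (x (k'+1) - x') (y (k'+1) - y')) :=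
          le_trans hgap hcs
      _ ≤ (Real.sqrt (q 0) / Real.sqrt ((k' : ℝ) + 1)) * (Real.sqrt (q 0) + SQ) := by
          apply mul_le_mul hsr htri' (Real.sqrt_nonneg _)
          positivity
  have hcast : ((k' + 1 : ℕ) : ℝ) = (k' : ℝ) + 1 := by push_cast; ring
  rw [hcast]
  have heq : (Real.sqrt (q 0) / Real.sqrt ((k' : ℝ) + 1)) * (Real.sqrt (q 0) + SQ) =
      (1 / Real.sqrt ((k' : ℝ) + 1)) * (q 0 + Real.sqrt (q 0) * SQ) := by
    have := Real.mul_self_sqrt (hq_nonneg 0)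
    field_simp
    nlinarith [this]
  linarith [hchain, heq.le, heq.ge]
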